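/- Let a ∈ ℝ and b ∈ ℝ ∪ {+∞} with a < b, let m : [a,b) → ℝ be strictly increasing, continuous from the right at a, differentiable on (a,b) with derivative bounded on every closed subinterval [a',b'] ⊂ (a,b), and satisfying m(x) → +∞ as x → b⁻. Let f : [a,b) → [0,∞) be Riemann integrable on compact subintervals with sup_{[a,b)} f < +∞ and f(x) → 0 as x → b⁻. Then A_m(a,R; m^→[f]) → 0 as R → b⁻. -/

import Mathlib

open MeasureTheory Set Filter

/-- The integral average `A_m(r,R;f) = (1/(m R - m r)) ∫_r^R f dm`, where the
Riemann–Stieltjes integral `∫_r^R f dm` is expressed as `∫_r^R f(x) m'(x) dx`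
(valid since `m` is differentiable with locally bounded derivative). -/
noncomputable def intAvg (m f : ℝ → ℝ) (r R : ℝ) : ℝ :=
  (m R - m r)⁻¹ * ∫ x in r..R, f x * deriv m x

/-- The right maximization `m^→[f](r) = sup_{x ∈ [r,b)} f x`, for `b ∈ ℝ ∪ {+∞}`. -/
noncomputable def rightMax (b : EReal) (f : ℝ → ℝ) (r : ℝ) : ℝ :=
  sSup (f '' {x : ℝ | r ≤ x ∧ (x : EReal) < b})

/-- The filter of real numbers tending to `b ∈ ℝ ∪ {+∞}` from the left. -/
noncomputable def toBFilter (b : EReal) : Filter ℝ :=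
  Filter.comap (Real.toEReal) (nhdsWithin b (Set.Iio b))

lemma exists_real_btwn {x : ℝ} {b : EReal} (h : (x : EReal) < b) :
    ∃ y : ℝ, x < y ∧ (y : EReal) < b := by
  obtain ⟨z, hz1, hz2⟩ := exists_between h
  lift z to ℝ using ⟨(hz2.trans_le le_top).ne, ((EReal.bot_lt_coe x).trans hz1).ne'⟩
  exact ⟨z, EReal.coe_lt_coe_iff.mp hz1, hz2⟩

lemma eventually_toBFilter {b : EReal} {c : ℝ} (h : (c : EReal) < b) :
    ∀ᶠ R in toBFilter b, c < R ∧ (R : EReal) < b := by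
  have hmem : Ioi (c : EReal) ∩ Iio b ∈ nhdsWithin b (Iio b) :=
    inter_mem (mem_nhdsWithin_of_mem_nhds (isOpen_Ioi.mem_nhds h)) self_mem_nhdsWithin
  filter_upwards [Filter.preimage_mem_comap hmem] with R hR
  exact ⟨EReal.coe_lt_coe_iff.mp hR.1, hR.2⟩

theorem stmt_7 (a : ℝ) (b : EReal) (hab : (a : EReal) < b) (m f : ℝ → ℝ)
    (hm_mono : StrictMonoOn m {x : ℝ | a ≤ x ∧ (x : EReal) < b})
    (hm_rc : ContinuousWithinAt m (Set.Ici a) a)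
    (hm_diff : ∀ x : ℝ, a < x → (x : EReal) < b → DifferentiableAt ℝ m x)
    (hm_bdd : ∀ a' b' : ℝ, a < a' → a' ≤ b' → (b' : EReal) < b →
      ∃ C : ℝ, ∀ x ∈ Set.Icc a' b', |deriv m x| ≤ C)
    (hm_top : Filter.Tendsto m (toBFilter b) Filter.atTop)
    (hf_nonneg : ∀ x : ℝ, a ≤ x → (x : EReal) < b → 0 ≤ f x)
    (hf_int : ∀ c d : ℝ, a ≤ c → c ≤ d → (d : EReal) < b →
      IntervalIntegrable f MeasureTheory.volume c d)
    (hf_bdd : ∃ C : ℝ, ∀ x : ℝ, a ≤ x → (x : EReal) < b → f x ≤ C)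
    (hf_zero : Filter.Tendsto f (toBFilter b) (nhds 0)) :
    Filter.Tendsto (fun R => intAvg m (rightMax b f) a R) (toBFilter b) (nhds 0) := by
  classical
  set g := rightMax b f with hg_def
  obtain ⟨C₀, hC₀⟩ := hf_bdd
  set C : ℝ := max C₀ 0 with hC_def
  have hC : ∀ x, a ≤ x → (x : EReal) < b → f x ≤ C :=
    fun x hx hxb => (hC₀ x hx hxb).trans (le_max_left _ _)
  have hset_ne : ∀ r : ℝ, (r : EReal) < b →
      (f '' {x : ℝ | r ≤ x ∧ (x : EReal) < b}).Nonempty :=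
    fun r hr => ⟨f r, r, ⟨le_rfl, hr⟩, rfl⟩
  have hbdd : ∀ r : ℝ, a ≤ r → BddAbove (f '' {x : ℝ | r ≤ x ∧ (x : EReal) < b}) := by
    intro r hr
    refine ⟨C, ?_⟩
    rintro _ ⟨x, ⟨hx1, hx2⟩, rfl⟩
    exact hC x (hr.trans hx1) hx2
  have hg_nonneg : ∀ r, a ≤ r → (r : EReal) < b → 0 ≤ g r := fun r h1 h2 =>
    (hf_nonneg r h1 h2).trans (le_csSup (hbdd r h1) ⟨r, ⟨le_rfl, h2⟩, rfl⟩)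
  have hg_le : ∀ r, a ≤ r → (r : EReal) < b → g r ≤ C := by
    intro r h1 h2
    refine csSup_le (hset_ne r h2) ?_
    rintro _ ⟨x, ⟨hx1, hx2⟩, rfl⟩
    exact hC x (h1.trans hx1) hx2
  have hg_anti : ∀ x y, a ≤ x → x ≤ y → (y : EReal) < b → g y ≤ g x := by
    intro x y hx hxy hyb
    refine csSup_le_csSup (hbdd x hx) (hset_ne y hyb) (image_mono (f := f) ?_)
    rintro z ⟨hz1, hz2⟩
    exact ⟨hxy.trans hz1, hz2⟩
  have hderiv_nonneg : ∀ x, a < x → (x : EReal) < b → 0 ≤ deriv m x := by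
    intro x hax hxb
    obtain ⟨x', hxx', hx'b⟩ := exists_real_btwn hxb
    have hd := (hm_diff x hax hxb).hasDerivAt
    rw [hasDerivAt_iff_tendsto_slope] at hd
    have hd' : Tendsto (slope m x) (nhdsWithin x (Ioi x)) (nhds (deriv m x)) :=
      hd.mono_left (nhdsWithin_mono x fun y hy => ne_of_gt hy)
    refine ge_of_tendsto hd' ?_
    filter_upwards [Ioo_mem_nhdsGT_of_mem (left_mem_Ico.mpr hxx')] with y hy
    have hmlt : m x < m y := by
      refine hm_mono ⟨hax.le, hxb⟩
        ⟨(hax.trans hy.1).le, lt_trans (EReal.coe_lt_coe_iff.mpr hy.2) hx'b⟩ hy.1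
    rw [slope_def_field]
    exact div_nonneg (by linarith) (by linarith [hy.1])
  have hsmall : ∀ ε : ℝ, 0 < ε → ∃ c : ℝ, a ≤ c ∧ (c : EReal) < b ∧
      ∀ x, c < x → (x : EReal) < b → f x < ε := by
    intro ε hε
    have h1 : ∀ᶠ x in toBFilter b, |f x| < ε := by
      have := Metric.tendsto_nhds.mp hf_zero ε hε
      simpa [Real.dist_eq] using this
    obtain ⟨t, ht, hts⟩ := Filter.mem_comap.mp h1
    obtain ⟨u, hu_open, hbu, hsub⟩ := mem_nhdsWithin.mp ht
    obtain ⟨c', hc'b, hIoc⟩ := exists_Ioc_subset_of_mem_nhds (hu_open.mem_nhds hbu) ⟨(a : EReal), hab⟩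
    have key : ∀ c : ℝ, a ≤ c → (c' ≤ (c : EReal)) → (c : EReal) < b →
        ∃ c : ℝ, a ≤ c ∧ (c : EReal) < b ∧ ∀ x, c < x → (x : EReal) < b → f x < ε := by
      intro c hac hc'c hcb
      refine ⟨c, hac, hcb, fun x hcx hxb => ?_⟩
      have hxu : (x : EReal) ∈ u :=
        hIoc ⟨lt_of_le_of_lt hc'c (EReal.coe_lt_coe_iff.mpr hcx), hxb.le⟩
      have hxt : (x : EReal) ∈ t := hsub ⟨hxu, hxb⟩
      exact lt_of_le_of_lt (le_abs_self _) (hts hxt)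
    induction c' with
    | bot => exact key a le_rfl bot_le hab
    | coe c'' =>
      refine key (max a c'') (le_max_left _ _) ?_ ?_
      · exact_mod_cast EReal.coe_le_coe_iff.mpr (le_max_right _ _)
      · rcases le_total a c'' with h | h
        · rw [max_eq_right h]; exact hc'b
        · rw [max_eq_left h]; exact hab
    | top => exact absurd hc'b (not_top_lt)
    -- case split on integrability of g * m' near a
  by_cases hP : ∀ R : ℝ, a < R → (R : EReal) < b →
      IntervalIntegrable (fun x => g x * deriv m x) volume a R
  · -- integrable case
    rw [Metric.tendsto_nhds]
    intro ε hε
    obtain ⟨c, hca, hcb, hc⟩ := hsmall (ε / 2) (by positivity)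
    obtain ⟨r, hcr, hrb⟩ := exists_real_btwn hcb
    have har : a < r := lt_of_le_of_lt hca hcr
    have hgsmall : ∀ x, r ≤ x → (x : EReal) < b → g x ≤ ε / 2 := by
      intro x hx hxb
      refine csSup_le (hset_ne x hxb) ?_
      rintro _ ⟨y, ⟨hy1, hy2⟩, rfl⟩
      exact (hc y (hcr.trans_le (hx.trans hy1)) hy2).le
    set K : ℝ := ∫ x in a..r, g x * deriv m x with hK_def
    have hm_ev : ∀ᶠ R in toBFilter b,
        m a + 1 ≤ m R ∧ m a + (2 * |K| / ε + 1) ≤ m R :=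
      (hm_top.eventually_ge_atTop _).and (hm_top.eventually_ge_atTop _)
    filter_upwards [hm_ev, eventually_toBFilter hrb] with R hK12 hrR2
    obtain ⟨hK1, hK2⟩ := hK12
    obtain ⟨hrR, hRb⟩ := hrR2
    have haR : a < R := har.trans hrR
    -- integrability of deriv m on [r, R]
    obtain ⟨C', hC'⟩ := hm_bdd r R har hrR.le hRb
    have hm'_int : IntervalIntegrable (deriv m) volume r R := by
      refine (intervalIntegrable_const (c := C')).mono_fun'
        ((measurable_deriv m).aestronglyMeasurable.restrict) ?_
      refine (ae_restrict_iff' measurableSet_uIoc).mpr (ae_of_all _ fun x hx => ?_)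
      rw [uIoc_of_le hrR.le] at hx
      simpa [Real.norm_eq_abs] using hC' x (Ioc_subset_Icc_self hx)
    -- integrability of g on [r, R] and of g * deriv m on [r, R]
    have hxmem : ∀ x ∈ Icc r R, a ≤ x ∧ (x : EReal) < b := fun x hx =>
      ⟨har.le.trans hx.1, lt_of_le_of_lt (EReal.coe_le_coe_iff.mpr hx.2) hRb⟩
    have hg_int : IntervalIntegrable g volume r R := by
      refine AntitoneOn.intervalIntegrable ?_
      rw [uIcc_of_le hrR.le]
      intro x hx y hy hxy
      exact hg_anti x y (hxmem x hx).1 hxy (hxmem y hy).2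
    have hgm_int : IntervalIntegrable (fun x => g x * deriv m x) volume r R := by
      have hAESM : AEStronglyMeasurable (fun x => g x * deriv m x)
          (volume.restrict (Set.uIoc r R)) := by
        rw [uIoc_of_le hrR.le]
        exact hg_int.aestronglyMeasurable.mul
          ((measurable_deriv m).aestronglyMeasurable.restrict)
      refine (hm'_int.abs.const_mul C).mono_fun' hAESM ?_
      refine (ae_restrict_iff' measurableSet_uIoc).mpr (ae_of_all _ fun x hx => ?_)
      rw [uIoc_of_le hrR.le] at hx
      have hx' := hxmem x (Ioc_subset_Icc_self hx)
      have h1 : |g x| = g x := abs_of_nonneg (hg_nonneg x hx'.1 hx'.2)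
      show ‖g x * deriv m x‖ ≤ C * |deriv m x|
      rw [Real.norm_eq_abs, abs_mul, h1]
      exact mul_le_mul_of_nonneg_right (hg_le x hx'.1 hx'.2) (abs_nonneg _)
    -- split the integral
    have hsplit : (∫ x in a..R, g x * deriv m x)
        = K + ∫ x in r..R, g x * deriv m x :=
      (intervalIntegral.integral_add_adjacent_intervals (hP r har hrb) hgm_int).symm
    -- FTC on [r, R]
    have hftc : (∫ x in r..R, deriv m x) = m R - m r := by
      refine intervalIntegral.integral_deriv_eq_sub (fun x hx => ?_) hm'_int
      rw [uIcc_of_le hrR.le] at hx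
      exact hm_diff x (har.trans_le hx.1) (hxmem x hx).2
    -- bound the tail integral
    have hmono : (∫ x in r..R, g x * deriv m x) ≤ ε / 2 * (m R - m r) := by
      calc (∫ x in r..R, g x * deriv m x)
          ≤ ∫ x in r..R, ε / 2 * deriv m x := by
            refine intervalIntegral.integral_mono_on hrR.le hgm_int (hm'_int.const_mul _)
              (fun x hx => ?_)
            have hx' := hxmem x hx
            have h1 : (0:ℝ) ≤ deriv m x := hderiv_nonneg x (har.trans_le hx.1) hx'.2
            exact mul_le_mul_of_nonneg_right (hgsmall x hx.1 hx'.2) h1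
        _ = ε / 2 * (m R - m r) := by
            rw [intervalIntegral.integral_const_mul, hftc]
    -- nonnegativity of the full integral
    have hI_nonneg : 0 ≤ ∫ x in a..R, g x * deriv m x := by
      refine intervalIntegral.integral_nonneg_of_ae_restrict haR.le ?_
      have h_ne : ∀ᵐ x : ℝ ∂(volume.restrict (Icc a R)), x ≠ a := by
        refine ae_restrict_of_ae ?_
        rw [ae_iff]
        simpa using Real.volume_singleton (a := a)
      filter_upwards [h_ne, ae_restrict_mem measurableSet_Icc] with x hne hmem
      have hax : a < x := lt_of_le_of_ne hmem.1 (Ne.symm hne)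
      have hxb : (x : EReal) < b := lt_of_le_of_lt (EReal.coe_le_coe_iff.mpr hmem.2) hRb
      exact mul_nonneg (hg_nonneg x hax.le hxb) (hderiv_nonneg x hax hxb)
    -- final estimate
    have hmr_le : m a ≤ m r := (hm_mono ⟨le_rfl, hab⟩ ⟨har.le, hrb⟩ har).le
    set D : ℝ := m R - m a with hD_def
    have hD1 : 1 ≤ D := by simp only [hD_def]; linarith
    have hD0 : 0 < D := lt_of_lt_of_le one_pos hD1
    have hDK : 2 * |K| / ε + 1 ≤ D := by simp only [hD_def]; linarith
    have havg : intAvg m g a R = D⁻¹ * ∫ x in a..R, g x * deriv m x := rfl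
    have hIle : (∫ x in a..R, g x * deriv m x) ≤ K + ε / 2 * D := by
      rw [hsplit]
      have h1 : ε / 2 * (m R - m r) ≤ ε / 2 * D := by
        refine mul_le_mul_of_nonneg_left ?_ (by positivity)
        simp only [hD_def]; linarith
      linarith
    have h1 : 0 ≤ intAvg m g a R := by
      rw [havg]; exact mul_nonneg (inv_nonneg.mpr hD0.le) hI_nonneg
    have h2 : intAvg m g a R ≤ D⁻¹ * K + ε / 2 := by
      rw [havg]
      have := mul_le_mul_of_nonneg_left hIle (inv_nonneg.mpr hD0.le)
      calc D⁻¹ * ∫ x in a..R, g x * deriv m x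
          ≤ D⁻¹ * (K + ε / 2 * D) := this
        _ = D⁻¹ * K + ε / 2 * (D⁻¹ * D) := by ring
        _ = D⁻¹ * K + ε / 2 := by rw [inv_mul_cancel₀ hD0.ne']; ring
    have h3 : D⁻¹ * K < ε / 2 := by
      have hKle : K ≤ |K| := le_abs_self K
      have habs : 0 ≤ |K| := abs_nonneg K
      have hεD : 2 * |K| < ε * D := by
        have : ε * (2 * |K| / ε + 1) ≤ ε * D := mul_le_mul_of_nonneg_left hDK hε.le
        rw [mul_add, mul_div_cancel₀ _ hε.ne'] at this
        nlinarith
      rw [inv_mul_eq_div, div_lt_iff₀ hD0]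
      nlinarith
    rw [Real.dist_eq, sub_zero, abs_of_nonneg h1]
    linarith
  · -- non-integrable case : the interval integral is eventually the junk value 0
    push_neg at hP
    obtain ⟨R₀, hR₀a, hR₀b, hni⟩ := hP
    have hev : ∀ᶠ R in toBFilter b, intAvg m g a R = 0 := by
      filter_upwards [eventually_toBFilter hR₀b] with R hR
      have hni' : ¬ IntervalIntegrable (fun x => g x * deriv m x) volume a R := by
        intro h
        refine hni (h.mono_set' ?_)
        rw [uIoc_of_le hR₀a.le, uIoc_of_le (hR₀a.trans hR.1).le]
        exact Ioc_subset_Ioc le_rfl hR.1.le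
      show (m R - m a)⁻¹ * (∫ x in a..R, g x * deriv m x) = 0
      rw [intervalIntegral.integral_undef hni', mul_zero]
    exact Tendsto.congr' (hev.mono fun R h => h.symm) tendsto_const_nhds
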